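/- arXiv:1610.03515 — 4 statements merged into one kernel-verified Lean document; each statement's English description precedes it below -/
import Mathlib

section
/- Generalized Lax–Milgram (Babuška) theorem: for every bounded conjugate-linear functional G on H there exists a unique u ∈ H such that a(u,v) = G(v) for all v ∈ H, and this solution satisfies ‖u‖ ≤ γ⁻¹ ‖G‖, where ‖G‖ is the operator norm of G. -/
set_option maxHeartbeats 1000000

open scoped ComplexInnerProductSpace

/-- **Generalized Lax–Milgram (Babuška) theorem.**
Let `H` be a complex Hilbert space and `a : H × H → ℂ` a bounded sesquilinear form
(linear in the first argument, conjugate-linear in the second) satisfying the inf-sup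
condition with constant `γ > 0` and the transposed inf-sup condition.  Then for every
bounded conjugate-linear functional `G` on `H` there is a unique `u ∈ H` with
`a(u,v) = G(v)` for all `v`, and this solution satisfies `‖u‖ ≤ γ⁻¹ ‖G‖`. -/
theorem generalized_lax_milgram
    {H : Type*} [NormedAddCommGroup H] [InnerProductSpace ℂ H] [CompleteSpace H]
    (a : H → H → ℂ)
    (ha_add₁ : ∀ u u' v : H, a (u + u') v = a u v + a u' v)
    (ha_smul₁ : ∀ (c : ℂ) (u v : H), a (c • u) v = c * a u v)
    (ha_add₂ : ∀ u v v' : H, a u (v + v') = a u v + a u v')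
    (ha_smul₂ : ∀ (u : H) (c : ℂ) (v : H), a u (c • v) = (starRingEnd ℂ) c * a u v)
    (M : ℝ) (hM : 0 < M)
    (ha_bdd : ∀ u v : H, ‖a u v‖ ≤ M * ‖u‖ * ‖v‖)
    (γ : ℝ)
    (hγ : γ = ⨅ u : {u : H // u ≠ 0}, ⨆ v : {v : H // v ≠ 0},
      ‖a u v‖ / (‖(u : H)‖ * ‖(v : H)‖))
    (hγ_pos : 0 < γ)
    (h_transposed : ∀ v : H, v ≠ 0 → ∃ u : H, a u v ≠ 0)
    (G : H →SL[starRingEnd ℂ] ℂ) :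
    (∃! u : H, ∀ v : H, a u v = G v) ∧
      ∀ u : H, (∀ v : H, a u v = G v) → ‖u‖ ≤ γ⁻¹ * ‖G‖ := by
  classical
  have habs : ∀ z : ℂ, ‖z‖ = ‖z‖ := fun z => rfl
  -- Riesz representative of the conjugate-linear functional v ↦ a u v
  have hex : ∀ u : H, ∃ w : H, (∀ v : H, ⟪w, v⟫ = (starRingEnd ℂ) (a u v)) ∧ ‖w‖ ≤ M * ‖u‖ := by
    intro u
    let f : H →ₗ[ℂ] ℂ :=
      { toFun := fun v => (starRingEnd ℂ) (a u v)
        map_add' := by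
          intro v v'
          show (starRingEnd ℂ) (a u (v + v')) = _
          rw [ha_add₂]; simp
        map_smul' := by
          intro c v
          show (starRingEnd ℂ) (a u (c • v)) = c * (starRingEnd ℂ) (a u v)
          rw [ha_smul₂]; simp }
    have hbnd : ∀ v : H, ‖f v‖ ≤ M * ‖u‖ * ‖v‖ := by
      intro v
      show ‖(starRingEnd ℂ) (a u v)‖ ≤ _
      rw [RCLike.norm_conj, habs]
      exact ha_bdd u v
    let F : H →L[ℂ] ℂ := LinearMap.mkContinuous f (M * ‖u‖) hbnd
    refine ⟨(InnerProductSpace.toDual ℂ H).symm F, fun v => InnerProductSpace.toDual_symm_apply, ?_⟩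
    calc ‖(InnerProductSpace.toDual ℂ H).symm F‖ = ‖F‖ := LinearIsometryEquiv.norm_map _ _
      _ ≤ M * ‖u‖ := LinearMap.mkContinuous_norm_le _ (by positivity) _
  choose T hT hTnorm using hex
  have hTa : ∀ u v : H, a u v = ⟪v, T u⟫ := by
    intro u v
    rw [← inner_conj_symm, hT]
    simp
  have hTadd : ∀ u u', T (u + u') = T u + T u' := by
    intro u u'
    apply ext_inner_left ℂ
    intro v
    rw [inner_add_right, ← hTa, ← hTa, ← hTa, ha_add₁]
  have hTsmul : ∀ (c : ℂ) (u : H), T (c • u) = c • T u := by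
    intro c u
    apply ext_inner_left ℂ
    intro v
    rw [inner_smul_right, ← hTa, ← hTa, ha_smul₁]
  -- lower bound from the inf-sup condition
  have hlow : ∀ u : H, γ * ‖u‖ ≤ ‖T u‖ := by
    intro u
    rcases eq_or_ne u 0 with rfl | hu
    · simp
    haveI : Nonempty {v : H // v ≠ 0} := ⟨⟨u, hu⟩⟩
    have h1 : γ ≤ ⨆ v : {v : H // v ≠ 0},
        ‖a u v‖ / (‖u‖ * ‖(v : H)‖) := by
      have hbdd : BddBelow (Set.range fun u : {u : H // u ≠ 0} =>
          ⨆ v : {v : H // v ≠ 0}, ‖a u v‖ / (‖(u : H)‖ * ‖(v : H)‖)) := by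
        refine ⟨0, ?_⟩
        rintro x ⟨w, rfl⟩
        exact Real.iSup_nonneg fun v => by positivity
      rw [hγ]
      exact ciInf_le hbdd ⟨u, hu⟩
    have h2 : (⨆ v : {v : H // v ≠ 0},
        ‖a u v‖ / (‖u‖ * ‖(v : H)‖)) ≤ ‖T u‖ / ‖u‖ := by
      refine ciSup_le fun v => ?_
      have hv : (0:ℝ) < ‖(v : H)‖ := norm_pos_iff.mpr v.2
      have hu' : (0:ℝ) < ‖u‖ := norm_pos_iff.mpr hu
      have hb : ‖a u v‖ ≤ ‖(v:H)‖ * ‖T u‖ := by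
        rw [← habs, hTa u v]
        exact norm_inner_le_norm _ _
      rw [div_le_div_iff₀ (by positivity) hu']
      calc ‖a u v‖ * ‖u‖ ≤ (‖(v:H)‖ * ‖T u‖) * ‖u‖ :=
            mul_le_mul_of_nonneg_right hb (le_of_lt hu')
        _ = ‖T u‖ * (‖u‖ * ‖(v:H)‖) := by ring
    have := h1.trans h2
    rw [le_div_iff₀ (norm_pos_iff.mpr hu)] at this
    linarith
  -- package T as a continuous linear map
  obtain ⟨A, hA⟩ : ∃ A : H →L[ℂ] H, ∀ u, A u = T u :=
    ⟨LinearMap.mkContinuous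
      { toFun := T, map_add' := hTadd, map_smul' := hTsmul } M
      (fun u => hTnorm u), fun u => rfl⟩
  have hanti : AntilipschitzWith (γ⁻¹).toNNReal A := by
    refine A.antilipschitz_of_bound fun u => ?_
    rw [Real.coe_toNNReal _ (by positivity), hA, inv_mul_eq_div, le_div_iff₀' hγ_pos]
    exact hlow u
  have hclosed : IsClosed (LinearMap.range (A : H →ₗ[ℂ] H) : Set H) :=
    hanti.isClosed_range A.uniformContinuous
  have hrange : LinearMap.range (A : H →ₗ[ℂ] H) = ⊤ := by
    haveI := hclosed.completeSpace_coe
    rw [← (LinearMap.range (A : H →ₗ[ℂ] H)).orthogonal_orthogonal, Submodule.eq_top_iff']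
    intro v w hw
    obtain rfl : w = 0 := by
      by_contra hw0
      obtain ⟨u, hu⟩ := h_transposed w hw0
      apply hu
      have h0 : ⟪A u, w⟫ = 0 := hw (A u) (LinearMap.mem_range_self _ u)
      rw [hA, hT] at h0
      simpa using congrArg (starRingEnd ℂ) h0
    exact inner_zero_left _
  -- Riesz representative of G
  obtain ⟨g, hg, hgnorm⟩ : ∃ g : H, (∀ v : H, (G v : ℂ) = ⟪v, g⟫) ∧ ‖g‖ ≤ ‖G‖ := by
    let f : H →ₗ[ℂ] ℂ :=
      { toFun := fun v => (starRingEnd ℂ) (G v)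
        map_add' := by intro v v'; simp
        map_smul' := by intro c v; simp }
    have hbnd : ∀ v : H, ‖f v‖ ≤ ‖G‖ * ‖v‖ := by
      intro v
      show ‖(starRingEnd ℂ) (G v)‖ ≤ _
      rw [RCLike.norm_conj]
      exact G.le_opNorm v
    let F : H →L[ℂ] ℂ := LinearMap.mkContinuous f ‖G‖ hbnd
    refine ⟨(InnerProductSpace.toDual ℂ H).symm F, fun v => ?_, ?_⟩
    · rw [← inner_conj_symm, InnerProductSpace.toDual_symm_apply]
      simp [F, f]
    · calc ‖(InnerProductSpace.toDual ℂ H).symm F‖ = ‖F‖ := LinearIsometryEquiv.norm_map _ _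
        _ ≤ ‖G‖ := LinearMap.mkContinuous_norm_le _ (norm_nonneg G) _
  obtain ⟨u₀, hu₀⟩ := (LinearMap.range_eq_top (f := (A : H →ₗ[ℂ] H))).mp (by rw [← hrange]) g
  have hsol : ∀ v, a u₀ v = G v := by
    intro v
    rw [hTa, hg v, ← hA u₀, show A u₀ = g from hu₀]
  -- each solution satisfies T u = g
  have hTg : ∀ u : H, (∀ v : H, a u v = G v) → T u = g := by
    intro u hu
    apply ext_inner_left ℂ
    intro v
    rw [← hTa, hu v, hg v]
  have hbound : ∀ u : H, (∀ v : H, a u v = G v) → ‖u‖ ≤ γ⁻¹ * ‖G‖ := by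
    intro u hu
    have h1 : γ * ‖u‖ ≤ ‖G‖ := (hlow u).trans (by rw [hTg u hu]; exact hgnorm)
    rw [← le_div_iff₀' hγ_pos] at h1
    rw [inv_mul_eq_div]
    exact h1
  refine ⟨⟨u₀, hsol, ?_⟩, hbound⟩
  intro u hu
  have : A u = A u₀ := by rw [hA, hA, hTg u hu, hTg u₀ hsol]
  exact hanti.injective this
end

section
/- Sign properties of the Dirichlet-to-Neumann quadratic form: for every Schwartz function φ : ℝ → ℂ, Re(∫_ℝ conj(φ(x)) (T_k φ)(x) dx) ≤ 0 and Im(∫_ℝ conj(φ(x)) (T_k φ)(x) dx) ≥ 0. -/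
open MeasureTheory

/-- The branch of the complex square root used for the upper half plane:
`ρ(w) := √((|w| + Re w)/2) + i √((|w| − Re w)/2)`; for `Im w ≥ 0` it satisfies
`ρ(w)² = w`, `Re ρ(w) ≥ 0` and `Im ρ(w) ≥ 0`. -/
noncomputable def rho (w : ℂ) : ℂ :=
  (Real.sqrt ((‖w‖ + w.re) / 2) : ℝ) +
    Complex.I * (Real.sqrt ((‖w‖ - w.re) / 2) : ℝ)

/-- The Fourier transform `φ̂(ξ) = (2π)^{−1/2} ∫ e^{−ixξ} φ(x) dx` of a Schwartz function. -/
noncomputable def ft (φ : SchwartzMap ℝ ℂ) (ξ : ℝ) : ℂ :=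
  ((Real.sqrt (2 * Real.pi) : ℝ) : ℂ)⁻¹ *
    ∫ x : ℝ, Complex.exp (-Complex.I * x * ξ) * φ x

/-- The Dirichlet-to-Neumann operator on Schwartz functions:
`(T_k φ)(x) = (2π)^{−1/2} ∫ i ρ(k²−ξ²) e^{ixξ} φ̂(ξ) dξ`. -/
noncomputable def dtn (k : ℂ) (φ : SchwartzMap ℝ ℂ) (x : ℝ) : ℂ :=
  ((Real.sqrt (2 * Real.pi) : ℝ) : ℂ)⁻¹ *
    ∫ ξ : ℝ, Complex.I * rho (k ^ 2 - (ξ : ℂ) ^ 2) * Complex.exp (Complex.I * x * ξ) * ft φ ξ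

lemma rho_re (w : ℂ) : (rho w).re = Real.sqrt ((‖w‖ + w.re) / 2) := by
  simp [rho]

lemma rho_im (w : ℂ) : (rho w).im = Real.sqrt ((‖w‖ - w.re) / 2) := by
  simp [rho]

lemma rho_re_nonneg (w : ℂ) : 0 ≤ (rho w).re := by rw [rho_re]; positivity

lemma rho_im_nonneg (w : ℂ) : 0 ≤ (rho w).im := by rw [rho_im]; positivity

lemma rho_norm (w : ℂ) : ‖rho w‖ = Real.sqrt (‖w‖) := by
  have h1 : (0:ℝ) ≤ (‖w‖ + w.re) / 2 := by
    have := abs_le.mp (Complex.abs_re_le_norm w); linarith [this.1]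
  have h2 : (0:ℝ) ≤ (‖w‖ - w.re) / 2 := by
    have := abs_le.mp (Complex.abs_re_le_norm w); linarith [this.2]
  have : rho w = Complex.mk (Real.sqrt ((‖w‖ + w.re) / 2))
      (Real.sqrt ((‖w‖ - w.re) / 2)) := by
    apply Complex.ext <;> simp [rho_re, rho_im]
  rw [this]
  rw [Complex.norm_def, Complex.normSq_mk,
    Real.mul_self_sqrt h1, Real.mul_self_sqrt h2]
  congr 1; ring

lemma aux_re (a : ℂ) (r : ℝ) : (Complex.I * a * (r : ℂ)).re = -(a.im * r) := by
  simp [Complex.mul_re, Complex.mul_im]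

lemma aux_im (a : ℂ) (r : ℝ) : (Complex.I * a * (r : ℂ)).im = a.re * r := by
  simp [Complex.mul_re, Complex.mul_im]

lemma rho_continuous : Continuous rho := by
  unfold rho
  apply Continuous.add
  · exact Complex.continuous_ofReal.comp (Real.continuous_sqrt.comp
      ((continuous_norm.add Complex.continuous_re).div_const 2))
  · exact continuous_const.mul (Complex.continuous_ofReal.comp (Real.continuous_sqrt.comp
      ((continuous_norm.sub Complex.continuous_re).div_const 2)))

lemma norm_rho_le (k : ℂ) (ξ : ℝ) : ‖rho (k ^ 2 - (ξ:ℂ) ^ 2)‖ ≤ ‖k‖ + |ξ| := by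
  rw [rho_norm]
  have h1 : ‖k ^ 2 - (ξ:ℂ) ^ 2‖ ≤ ‖k‖ ^ 2 + ξ ^ 2 := by
    have := norm_sub_le (k ^ 2) ((ξ:ℂ) ^ 2)
    simp only [norm_pow, Complex.norm_real, Real.norm_eq_abs] at this
    calc ‖k ^ 2 - (ξ:ℂ) ^ 2‖ = ‖k ^ 2 - (ξ:ℂ) ^ 2‖ := rfl
      _ ≤ ‖k‖ ^ 2 + |ξ| ^ 2 := this
      _ = ‖k‖ ^ 2 + ξ ^ 2 := by rw [sq_abs]
  calc Real.sqrt (‖k ^ 2 - (ξ:ℂ) ^ 2‖) ≤ Real.sqrt ((‖k‖ + |ξ|) ^ 2) := by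
        apply Real.sqrt_le_sqrt
        nlinarith [norm_nonneg k, abs_nonneg ξ, sq_abs ξ,
          mul_nonneg (norm_nonneg k) (abs_nonneg ξ)]
    _ = ‖k‖ + |ξ| := Real.sqrt_sq (by positivity)

/-- The additive character `x ↦ e^{-i x}` on `ℝ` with values in the circle. -/
noncomputable def negChar : AddChar ℝ Circle where
  toFun x := Circle.exp (-x)
  map_zero_eq_one' := by simp
  map_add_eq_mul' x y := by simp [neg_add, Circle.exp_add, mul_comm]

lemma negChar_continuous : Continuous negChar := by
  show Continuous fun x : ℝ => Circle.exp (-x)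
  exact Circle.exp.continuous.comp continuous_neg

lemma negChar_smul (x : ℝ) (z : ℂ) : negChar x • z = Complex.exp (-x * Complex.I) * z := by
  rw [Circle.smul_def]
  show (Circle.exp (-x) : ℂ) • z = _
  rw [Circle.coe_exp, smul_eq_mul]
  push_cast
  ring_nf

lemma ft_eq (φ : SchwartzMap ℝ ℂ) (ξ : ℝ) :
    ft φ ξ = ((Real.sqrt (2*Real.pi) : ℝ) : ℂ)⁻¹ *
      (SchwartzMap.fourierTransformCLM ℂ φ) (ξ/(2*Real.pi)) := by
  rw [ft]; congr 1
  rw [SchwartzMap.fourierTransformCLM_apply, SchwartzMap.fourier_coe,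
    Real.fourier_real_eq_integral_exp_smul]
  congr 1 with x
  rw [smul_eq_mul]
  congr 2
  have hπ : (Real.pi) ≠ 0 := Real.pi_ne_zero
  rw [show (-2*Real.pi*x*(ξ/(2*Real.pi))) = -(x*ξ) from by field_simp]
  push_cast; ring

/-- Sign properties of the Dirichlet-to-Neumann quadratic form: for every Schwartz
function `φ`, `Re ∫ conj(φ) T_k φ ≤ 0` and `Im ∫ conj(φ) T_k φ ≥ 0`. -/
theorem dtn_sign (k : ℂ) (hk : 0 ≤ (k ^ 2).im) (φ : SchwartzMap ℝ ℂ) :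
    (∫ x : ℝ, (starRingEnd ℂ) (φ x) * dtn k φ x).re ≤ 0 ∧
      0 ≤ (∫ x : ℝ, (starRingEnd ℂ) (φ x) * dtn k φ x).im := by
  set s : ℝ := Real.sqrt (2 * Real.pi) with hs_def
  have hs : 0 < s := Real.sqrt_pos.mpr (by positivity)
  have hs' : (s : ℂ) ≠ 0 := by exact_mod_cast hs.ne'
  set c : ℂ := ((s : ℝ) : ℂ)⁻¹ with hc_def
  set ψ := SchwartzMap.fourierTransformCLM ℂ φ with hψ_def
  set g : ℝ → ℂ := fun ξ => Complex.I * rho (k ^ 2 - (ξ:ℂ) ^ 2) * ft φ ξ with hg_def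
  have h2π : (0:ℝ) < 2 * Real.pi := by positivity
  -- norms of ft
  have hFnorm : ∀ ξ : ℝ, ‖ft φ ξ‖ = s⁻¹ * ‖ψ (ξ/(2*Real.pi))‖ := by
    intro ξ
    rw [ft_eq, norm_mul, norm_inv, Complex.norm_real, Real.norm_eq_abs, abs_of_pos hs]
  have hF_cont : Continuous (ft φ) := by
    have : ft φ = fun ξ => ((s:ℝ):ℂ)⁻¹ * ψ (ξ/(2*Real.pi)) := funext (ft_eq φ)
    rw [this]
    exact continuous_const.mul (ψ.continuous.comp (by fun_prop))
  have hg_cont : Continuous g := by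
    apply Continuous.mul _ hF_cont
    exact continuous_const.mul (rho_continuous.comp (by fun_prop))
  -- integrability of g
  have h0 : Integrable (fun ξ : ℝ => ‖ψ (ξ/(2*Real.pi))‖) := by
    have := (ψ.integrable_pow_mul volume 0).comp_div (R := 2*Real.pi) h2π.ne'
    simpa using this
  have h1 : Integrable (fun ξ : ℝ => |ξ| * ‖ψ (ξ/(2*Real.pi))‖) := by
    have h := ((ψ.integrable_pow_mul volume 1).comp_div (R := 2*Real.pi) h2π.ne').const_mul
      (2*Real.pi)
    apply h.congr
    filter_upwards with ξ
    show (2*Real.pi) * (‖ξ/(2*Real.pi)‖ ^ 1 * ‖ψ (ξ/(2*Real.pi))‖) = |ξ| * ‖ψ (ξ/(2*Real.pi))‖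
    rw [pow_one, Real.norm_eq_abs, abs_div, abs_of_pos h2π]
    field_simp
  have hg_int : Integrable g := by
    apply Integrable.mono' ((h0.const_mul (s⁻¹ * ‖k‖)).add (h1.const_mul s⁻¹))
      hg_cont.aestronglyMeasurable
    filter_upwards with ξ
    have : ‖g ξ‖ = ‖rho (k ^ 2 - (ξ:ℂ) ^ 2)‖ * ‖ft φ ξ‖ := by
      rw [hg_def]; simp [norm_mul]
    rw [this, hFnorm]
    calc ‖rho (k ^ 2 - (ξ:ℂ) ^ 2)‖ * (s⁻¹ * ‖ψ (ξ/(2*Real.pi))‖)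
        ≤ (‖k‖ + |ξ|) * (s⁻¹ * ‖ψ (ξ/(2*Real.pi))‖) := by
          apply mul_le_mul_of_nonneg_right (norm_rho_le k ξ) (by positivity)
      _ = s⁻¹ * ‖k‖ * ‖ψ (ξ/(2*Real.pi))‖ + s⁻¹ * (|ξ| * ‖ψ (ξ/(2*Real.pi))‖) := by ring
  -- integrability of conj φ
  have hf_int : Integrable (fun x : ℝ => (starRingEnd ℂ) (φ x)) := by
    apply Integrable.mono' φ.integrable.norm
      ((Complex.continuous_conj.comp φ.continuous).aestronglyMeasurable)
    filter_upwards with x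
    simp
  -- Fubini / Parseval step
  set L : ℝ →ₗ[ℝ] ℝ →ₗ[ℝ] ℝ := LinearMap.mul ℝ ℝ with hL_def
  have hL : Continuous fun p : ℝ × ℝ => L p.1 p.2 := continuous_mul
  have key := VectorFourier.integral_bilin_fourierIntegral_eq_flip
    (ContinuousLinearMap.mul ℂ ℂ) negChar_continuous hL hf_int hg_int
  simp only [ContinuousLinearMap.mul_apply'] at key
  have hdtn : ∀ x : ℝ, dtn k φ x =
      c * VectorFourier.fourierIntegral negChar volume L.flip g x := by
    intro x
    rw [dtn, VectorFourier.fourierIntegral]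
    congr 1
    congr 1 with ξ
    rw [negChar_smul]
    simp only [LinearMap.flip_apply, hL_def, LinearMap.mul_apply']
    rw [show (-(-(x*ξ):ℝ) : ℂ) * Complex.I = Complex.I * x * ξ from by push_cast; ring]
    rw [hg_def]; ring
  have hFf : ∀ ξ : ℝ, VectorFourier.fourierIntegral negChar volume L
      (fun x => (starRingEnd ℂ) (φ x)) ξ = (s : ℂ) * (starRingEnd ℂ) (ft φ ξ) := by
    intro ξ
    rw [VectorFourier.fourierIntegral]
    have hpt : ∀ x : ℝ, negChar (-(L x ξ)) • (starRingEnd ℂ) (φ x)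
        = (starRingEnd ℂ) (Complex.exp (-Complex.I * x * ξ) * φ x) := by
      intro x
      rw [negChar_smul, map_mul, ← Complex.exp_conj]
      congr 2
      simp only [hL_def, LinearMap.mul_apply', map_mul, map_neg, Complex.conj_I,
        Complex.conj_ofReal]
      push_cast; ring
    simp_rw [hpt]
    rw [integral_conj, ft, map_mul, ← mul_assoc]
    rw [map_inv₀, Complex.conj_ofReal, mul_inv_cancel₀ hs', one_mul]
  have hmain : (∫ x : ℝ, (starRingEnd ℂ) (φ x) * dtn k φ x)
      = ∫ ξ : ℝ, (starRingEnd ℂ) (ft φ ξ) * g ξ := by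
    calc ∫ x : ℝ, (starRingEnd ℂ) (φ x) * dtn k φ x
        = ∫ x : ℝ, c * ((starRingEnd ℂ) (φ x) *
            VectorFourier.fourierIntegral negChar volume L.flip g x) := by
          apply integral_congr_ae
          filter_upwards with x
          rw [hdtn x]; ring
      _ = c * ∫ x : ℝ, (starRingEnd ℂ) (φ x) *
            VectorFourier.fourierIntegral negChar volume L.flip g x := integral_const_mul _ _
      _ = c * ∫ ξ : ℝ, VectorFourier.fourierIntegral negChar volume L
            (fun x => (starRingEnd ℂ) (φ x)) ξ * g ξ := by rw [key]
      _ = c * ∫ ξ : ℝ, (s : ℂ) * ((starRingEnd ℂ) (ft φ ξ) * g ξ) := by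
          congr 1
          apply integral_congr_ae
          filter_upwards with ξ
          rw [hFf ξ]; ring
      _ = c * ((s : ℂ) * ∫ ξ : ℝ, (starRingEnd ℂ) (ft φ ξ) * g ξ) := by
          rw [integral_const_mul]
      _ = ∫ ξ : ℝ, (starRingEnd ℂ) (ft φ ξ) * g ξ := by
          rw [← mul_assoc, hc_def, inv_mul_cancel₀ hs', one_mul]
  -- integrability of the final integrand
  have hInt : Integrable (fun ξ : ℝ => (starRingEnd ℂ) (ft φ ξ) * g ξ) := by
    apply hg_int.bdd_mul (c := s⁻¹ * (SchwartzMap.seminorm ℝ 0 0 ψ))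
      ((Complex.continuous_conj.comp hF_cont).aestronglyMeasurable)
    refine Filter.Eventually.of_forall (fun ξ => ?_)
    show ‖(starRingEnd ℂ) (ft φ ξ)‖ ≤ _
    rw [RCLike.norm_conj, hFnorm]
    exact mul_le_mul_of_nonneg_left (SchwartzMap.norm_le_seminorm ℝ ψ _) (by positivity)
  -- pointwise identity
  have hpt : ∀ ξ : ℝ, (starRingEnd ℂ) (ft φ ξ) * g ξ
      = Complex.I * rho (k ^ 2 - (ξ:ℂ) ^ 2) * (Complex.normSq (ft φ ξ) : ℝ) := by
    intro ξ
    rw [hg_def]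
    calc (starRingEnd ℂ) (ft φ ξ) * (Complex.I * rho (k ^ 2 - (ξ:ℂ) ^ 2) * ft φ ξ)
        = Complex.I * rho (k ^ 2 - (ξ:ℂ) ^ 2) * (ft φ ξ * (starRingEnd ℂ) (ft φ ξ)) := by ring
      _ = _ := by rw [Complex.mul_conj]
  rw [hmain]
  have hre := integral_re hInt
  have him := integral_im hInt
  simp only [RCLike.re_to_complex, RCLike.im_to_complex] at hre him
  constructor
  · rw [← hre]
    apply integral_nonpos
    intro ξ
    show ((starRingEnd ℂ) (ft φ ξ) * g ξ).re ≤ 0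
    rw [hpt ξ, aux_re]
    exact neg_nonpos.mpr (mul_nonneg (rho_im_nonneg _) (Complex.normSq_nonneg _))
  · rw [← him]
    apply integral_nonneg
    intro ξ
    show 0 ≤ ((starRingEnd ℂ) (ft φ ξ) * g ξ).im
    rw [hpt ξ, aux_im]
    exact mul_nonneg (rho_re_nonneg _) (Complex.normSq_nonneg _)
end

section
/- Pointwise form of the Rellich radiation inequality for an absorbing medium: let κ ∈ ℂ with α := Re κ > 0 and β := Im κ ≥ 0. Then for every ξ ∈ ℝ, |κ − ξ²| − ξ² + α ≤ (2√α + √2·√β) · Re ρ(κ − ξ²). -/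
/-- Pointwise form of the Rellich radiation inequality for an absorbing medium: if
`κ ∈ ℂ` with `α := Re κ > 0` and `β := Im κ ≥ 0`, then for every `ξ ∈ ℝ`,
`|κ − ξ²| − ξ² + α ≤ (2√α + √2 √β) · Re ρ(κ − ξ²)`. -/
theorem rellich_pointwise_absorbing (κ : ℂ) (hα : 0 < κ.re) (hβ : 0 ≤ κ.im) (ξ : ℝ) :
    ‖κ - (ξ : ℂ) ^ 2‖ - ξ ^ 2 + κ.re
      ≤ (2 * Real.sqrt κ.re + Real.sqrt 2 * Real.sqrt κ.im) * (rho (κ - (ξ : ℂ) ^ 2)).re := by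
  set w : ℂ := κ - (ξ : ℂ) ^ 2 with hw
  have hwre : w.re = κ.re - ξ ^ 2 := by simp [hw, ← Complex.ofReal_pow]
  have hwim : w.im = κ.im := by simp [hw, ← Complex.ofReal_pow]
  set r := ‖w‖ with hr
  have hr0 : (0:ℝ) ≤ r := norm_nonneg w
  have hrsq : r ^ 2 = w.re ^ 2 + w.im ^ 2 := by
    rw [hr, Complex.sq_norm, Complex.normSq_apply]; ring
  have habs : |w.re| ≤ r := Complex.abs_re_le_norm w
  have hra : 0 ≤ r + w.re := by
    have := neg_abs_le w.re; linarith
  -- key bound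
  have hkey : r + w.re ≤ 2 * κ.re + κ.im := by
    have hb : 0 ≤ w.im := by rw [hwim]; exact hβ
    have ha : w.re ≤ κ.re := by rw [hwre]; nlinarith [sq_nonneg ξ]
    rcases le_or_gt 0 w.re with h0 | h0
    · -- r ≤ a + b
      have : r ≤ w.re + w.im := by
        nlinarith [sq_nonneg (r - w.re - w.im), mul_nonneg h0 hb]
      linarith
    · -- r + a ≤ b
      have hrb : w.im ≤ r := by nlinarith
      have : r + w.re ≤ w.im := by
        nlinarith [mul_nonneg hb (sub_nonneg.mpr hrb)]
      linarith
  -- compute Re ρ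
  have hrho : (rho w).re = Real.sqrt ((r + w.re) / 2) := by
    simp [rho, Complex.add_re, Complex.mul_re, hr]
  set s := Real.sqrt ((r + w.re) / 2) with hs
  have hs0 : 0 ≤ s := Real.sqrt_nonneg _
  have hs2 : s ^ 2 = (r + w.re) / 2 := Real.sq_sqrt (by linarith)
  set A := Real.sqrt κ.re with hA
  set B := Real.sqrt (κ.im / 2) with hB
  have hA0 : 0 ≤ A := Real.sqrt_nonneg _
  have hB0 : 0 ≤ B := Real.sqrt_nonneg _
  have hA2 : A ^ 2 = κ.re := Real.sq_sqrt hα.le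
  have hB2 : B ^ 2 = κ.im / 2 := Real.sq_sqrt (by linarith)
  have hsAB : s ≤ A + B := by
    nlinarith [sq_nonneg (A + B - s), sq_nonneg (A + B + s)]
  have h2B : Real.sqrt 2 * Real.sqrt κ.im = 2 * B := by
    have h1 : Real.sqrt κ.im = Real.sqrt 2 * Real.sqrt (κ.im / 2) := by
      rw [← Real.sqrt_mul (by norm_num : (0:ℝ) ≤ 2)]
      ring_nf
    have h2 : Real.sqrt 2 * Real.sqrt 2 = 2 := Real.mul_self_sqrt (by norm_num)
    rw [h1, ← hB, ← mul_assoc, h2]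
  have hgoal : r + w.re ≤ (2 * A + Real.sqrt 2 * Real.sqrt κ.im) * s := by
    rw [h2B]
    nlinarith [mul_le_mul_of_nonneg_right hsAB hs0]
  calc r - ξ ^ 2 + κ.re = r + w.re := by rw [hwre]; ring
    _ ≤ (2 * A + Real.sqrt 2 * Real.sqrt κ.im) * s := hgoal
    _ = (2 * Real.sqrt κ.re + Real.sqrt 2 * Real.sqrt κ.im) * (rho w).re := by
        rw [hrho, hA]
end

section
/- Poincaré-type inequality on the strip above a rough surface: ∫_ℝ ∫_{f(x₁)}^{h} |u(x₁, x₂)|² dx₂ dx₁ ≤ 2h ∫_ℝ |u(x₁, f(x₁))|² dx₁ + 2h² ∫_ℝ ∫_{f(x₁)}^{h} |∂u/∂x₂ (x₁, x₂)|² dx₂ dx₁, where the inequality is asserted with values in [0, ∞]. -/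
open MeasureTheory
open scoped ENNReal NNReal

/-- AM-GM style inequality in `ℝ≥0∞`. -/
lemma enn_add_sq_le (p q : ℝ≥0∞) : (p + q) ^ 2 ≤ 2 * p ^ 2 + 2 * q ^ 2 := by
  induction p using ENNReal.recTopCoe with
  | top => simp [top_add, pow_two]
  | coe p =>
    induction q using ENNReal.recTopCoe with
    | top => simp [add_top, pow_two]
    | coe q =>
      have : ((p + q : ℝ≥0) : ℝ≥0∞) ^ 2 ≤ ((2 * p ^ 2 + 2 * q ^ 2 : ℝ≥0) : ℝ≥0∞) := by
        rw [← ENNReal.coe_pow, ENNReal.coe_le_coe, ← NNReal.coe_le_coe]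
        push_cast
        nlinarith [sq_nonneg ((p:ℝ) - (q:ℝ))]
      simpa [ENNReal.coe_add, ENNReal.coe_mul, ENNReal.coe_pow] using this

/-- Cauchy–Schwarz for lintegrals. -/
lemma lintegral_sq_le {α : Type*} [MeasurableSpace α] (μ : Measure α) (f : α → ℝ≥0∞)
    (hf : AEMeasurable f μ) :
    (∫⁻ a, f a ∂μ) ^ 2 ≤ μ Set.univ * ∫⁻ a, f a ^ 2 ∂μ := by
  have hpq : Real.HolderConjugate 2 2 := Real.HolderConjugate.two_two
  have H := ENNReal.lintegral_mul_le_Lp_mul_Lq μ hpq aemeasurable_const (f := fun _ => 1) hf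
  simp only [one_mul, Pi.mul_apply] at H
  have H2 : (∫⁻ a, f a ∂μ) ^ 2 ≤
      ((∫⁻ _, (1:ℝ≥0∞) ^ (2:ℝ) ∂μ) ^ (1/(2:ℝ)) * (∫⁻ a, f a ^ (2:ℝ) ∂μ) ^ (1/(2:ℝ))) ^ 2 := by
    exact pow_le_pow_left₀ (zero_le) H 2
  refine H2.trans_eq ?_
  rw [mul_pow]
  have hx : ∀ x : ℝ≥0∞, (x ^ (1/(2:ℝ))) ^ 2 = x := by
    intro x
    rw [← ENNReal.rpow_natCast (x ^ (1/(2:ℝ))) 2, ← ENNReal.rpow_mul]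
    norm_num
  rw [hx, hx]
  congr 1
  · simp [lintegral_const]
  · congr 1; ext a; rw [← ENNReal.rpow_natCast (f a) 2]; norm_num

/-- One-dimensional Poincaré-type inequality on `(a, h)` with boundary value at `a`. -/
lemma oneD (h a : ℝ) (ha : 0 ≤ a) (hah : a < h) (g : ℝ → ℂ) (hg : ContDiff ℝ 1 g) :
    (∫⁻ x in Set.Ioo a h, (‖g x‖₊ : ℝ≥0∞) ^ 2)
      ≤ ENNReal.ofReal (2 * h) * (‖g a‖₊ : ℝ≥0∞) ^ 2
        + ENNReal.ofReal (2 * h ^ 2) * ∫⁻ x in Set.Ioo a h, (‖deriv g x‖₊ : ℝ≥0∞) ^ 2 := by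
  have hg' : Continuous (deriv g) := hg.continuous_deriv le_rfl
  set I : ℝ≥0∞ := ∫⁻ x in Set.Ioo a h, (‖deriv g x‖₊ : ℝ≥0∞) ^ 2 with hI
  -- pointwise bound
  have key : ∀ x ∈ Set.Ioo a h, (‖g x‖₊ : ℝ≥0∞) ^ 2 ≤
      2 * (‖g a‖₊ : ℝ≥0∞) ^ 2 + 2 * (ENNReal.ofReal h * I) := by
    intro x hx
    have hax : a ≤ x := hx.1.le
    have hftc : ∫ y in a..x, deriv g y = g x - g a := by
      apply intervalIntegral.integral_deriv_eq_sub
      · intro y _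
        exact (hg.differentiable one_ne_zero).differentiableAt
      · exact hg'.intervalIntegrable a x
    have hgx : g x = g a + ∫ y in a..x, deriv g y := by rw [hftc]; ring
    have step1 : (‖g x‖₊ : ℝ≥0∞) ≤ (‖g a‖₊ : ℝ≥0∞) + ∫⁻ y in Set.Ioc a x, ‖deriv g y‖₊ := by
      calc (‖g x‖₊ : ℝ≥0∞) = (‖g a + ∫ y in a..x, deriv g y‖₊ : ℝ≥0∞) := by rw [← hgx]
        _ ≤ (‖g a‖₊ : ℝ≥0∞) + (‖∫ y in a..x, deriv g y‖₊ : ℝ≥0∞) := by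
            rw [← ENNReal.coe_add]; exact_mod_cast nnnorm_add_le _ _
        _ ≤ (‖g a‖₊ : ℝ≥0∞) + ∫⁻ y in Set.Ioc a x, ‖deriv g y‖₊ := by
            gcongr
            rw [intervalIntegral.integral_of_le hax]
            exact enorm_integral_le_lintegral_enorm _
    have step2 : (∫⁻ y in Set.Ioc a x, (‖deriv g y‖₊ : ℝ≥0∞)) ^ 2 ≤ ENNReal.ofReal h * I := by
      have CS := lintegral_sq_le (volume.restrict (Set.Ioc a x))
        (fun y => (‖deriv g y‖₊ : ℝ≥0∞)) (hg'.measurable.nnnorm.coe_nnreal_ennreal.aemeasurable)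
      refine CS.trans ?_
      rw [Measure.restrict_apply_univ, Real.volume_Ioc]
      gcongr
      · linarith [hx.2]
      · exact lintegral_mono_set (fun y hy => ⟨hy.1, lt_of_le_of_lt hy.2 hx.2⟩)
    calc (‖g x‖₊ : ℝ≥0∞) ^ 2
        ≤ ((‖g a‖₊ : ℝ≥0∞) + ∫⁻ y in Set.Ioc a x, ‖deriv g y‖₊) ^ 2 :=
          pow_le_pow_left₀ (zero_le) step1 2
      _ ≤ 2 * (‖g a‖₊ : ℝ≥0∞) ^ 2 + 2 * (∫⁻ y in Set.Ioc a x, (‖deriv g y‖₊ : ℝ≥0∞)) ^ 2 :=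
          enn_add_sq_le _ _
      _ ≤ 2 * (‖g a‖₊ : ℝ≥0∞) ^ 2 + 2 * (ENNReal.ofReal h * I) := by gcongr
  calc (∫⁻ x in Set.Ioo a h, (‖g x‖₊ : ℝ≥0∞) ^ 2)
      ≤ ∫⁻ _ in Set.Ioo a h, (2 * (‖g a‖₊ : ℝ≥0∞) ^ 2 + 2 * (ENNReal.ofReal h * I)) := by
        exact setLIntegral_mono' measurableSet_Ioo key
    _ = (2 * (‖g a‖₊ : ℝ≥0∞) ^ 2 + 2 * (ENNReal.ofReal h * I)) * ENNReal.ofReal (h - a) := by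
        rw [setLIntegral_const, Real.volume_Ioo]
    _ ≤ (2 * (‖g a‖₊ : ℝ≥0∞) ^ 2 + 2 * (ENNReal.ofReal h * I)) * ENNReal.ofReal h := by
        gcongr
        linarith
    _ = ENNReal.ofReal (2 * h) * (‖g a‖₊ : ℝ≥0∞) ^ 2 + ENNReal.ofReal (2 * h ^ 2) * I := by
        have h0 : (0:ℝ) ≤ h := by linarith
        rw [ENNReal.ofReal_mul (by norm_num : (0:ℝ) ≤ 2),
          ENNReal.ofReal_mul (by norm_num : (0:ℝ) ≤ 2), sq h,
          ENNReal.ofReal_mul h0, ENNReal.ofReal_ofNat]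
        ring

/-- Poincaré-type inequality on the strip above a rough surface: if `0 < h`, `f : ℝ → ℝ`
is continuous with `0 ≤ f(x₁) ≤ f₊ < h`, and `u : ℝ² → ℂ` is continuously differentiable,
then (with values in `[0,∞]`)
`∫∫_{f(x₁)<x₂<h} |u|² ≤ 2h ∫ |u(x₁,f(x₁))|² dx₁ + 2h² ∫∫_{f(x₁)<x₂<h} |∂u/∂x₂|²`. -/
theorem strip_poincare (h : ℝ) (hh : 0 < h) (f : ℝ → ℝ) (hf : Continuous f)
    (fplus : ℝ) (hf0 : ∀ x₁ : ℝ, 0 ≤ f x₁) (hfp : ∀ x₁ : ℝ, f x₁ ≤ fplus)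
    (hfph : fplus < h) (u : ℝ × ℝ → ℂ) (hu : ContDiff ℝ 1 u) :
    (∫⁻ x₁ : ℝ, ∫⁻ x₂ in Set.Ioo (f x₁) h, (‖u (x₁, x₂)‖₊ : ℝ≥0∞) ^ 2)
      ≤ ENNReal.ofReal (2 * h) * (∫⁻ x₁ : ℝ, (‖u (x₁, f x₁)‖₊ : ℝ≥0∞) ^ 2)
        + ENNReal.ofReal (2 * h ^ 2) *
          ∫⁻ x₁ : ℝ, ∫⁻ x₂ in Set.Ioo (f x₁) h,
            (‖deriv (fun t : ℝ => u (x₁, t)) x₂‖₊ : ℝ≥0∞) ^ 2 := by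
  have pointwise : ∀ x₁ : ℝ,
      (∫⁻ x₂ in Set.Ioo (f x₁) h, (‖u (x₁, x₂)‖₊ : ℝ≥0∞) ^ 2)
        ≤ ENNReal.ofReal (2 * h) * (‖u (x₁, f x₁)‖₊ : ℝ≥0∞) ^ 2
          + ENNReal.ofReal (2 * h ^ 2) *
            ∫⁻ x₂ in Set.Ioo (f x₁) h, (‖deriv (fun t : ℝ => u (x₁, t)) x₂‖₊ : ℝ≥0∞) ^ 2 := by
    intro x₁
    exact oneD h (f x₁) (hf0 x₁) ((hfp x₁).trans_lt hfph) (fun t => u (x₁, t))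
      (hu.comp (contDiff_const.prodMk contDiff_id))
  have meas1 : Measurable fun x₁ : ℝ =>
      ENNReal.ofReal (2 * h) * (‖u (x₁, f x₁)‖₊ : ℝ≥0∞) ^ 2 := by
    have : Continuous fun x₁ : ℝ => u (x₁, f x₁) := hu.continuous.comp (continuous_id.prodMk hf)
    exact (measurable_const.mul ((this.measurable.nnnorm.coe_nnreal_ennreal).pow_const 2))
  calc (∫⁻ x₁ : ℝ, ∫⁻ x₂ in Set.Ioo (f x₁) h, (‖u (x₁, x₂)‖₊ : ℝ≥0∞) ^ 2)
      ≤ ∫⁻ x₁ : ℝ, (ENNReal.ofReal (2 * h) * (‖u (x₁, f x₁)‖₊ : ℝ≥0∞) ^ 2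
          + ENNReal.ofReal (2 * h ^ 2) *
            ∫⁻ x₂ in Set.Ioo (f x₁) h, (‖deriv (fun t : ℝ => u (x₁, t)) x₂‖₊ : ℝ≥0∞) ^ 2) :=
        lintegral_mono pointwise
    _ = (∫⁻ x₁ : ℝ, ENNReal.ofReal (2 * h) * (‖u (x₁, f x₁)‖₊ : ℝ≥0∞) ^ 2)
          + ∫⁻ x₁ : ℝ, ENNReal.ofReal (2 * h ^ 2) *
            ∫⁻ x₂ in Set.Ioo (f x₁) h, (‖deriv (fun t : ℝ => u (x₁, t)) x₂‖₊ : ℝ≥0∞) ^ 2 :=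
        lintegral_add_left meas1 _
    _ = ENNReal.ofReal (2 * h) * (∫⁻ x₁ : ℝ, (‖u (x₁, f x₁)‖₊ : ℝ≥0∞) ^ 2)
          + ENNReal.ofReal (2 * h ^ 2) *
            ∫⁻ x₁ : ℝ, ∫⁻ x₂ in Set.Ioo (f x₁) h,
              (‖deriv (fun t : ℝ => u (x₁, t)) x₂‖₊ : ℝ≥0∞) ^ 2 := by
        rw [lintegral_const_mul' _ _ ENNReal.ofReal_ne_top,
          lintegral_const_mul' _ _ ENNReal.ofReal_ne_top]
end
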